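/- Let J be the Choi matrix of a quantum channel from a finite-dimensional system A to a finite-dimensional system B, and let r ≥ 0. Define, for each integer n ≥ 1, a_n := −(1/n)·log suc^NS(J^{(n)}, e^{n·r}) and b_n := −(1/n)·log suc^MC(J^{(n)}, e^{n·r}). Then limsup_{n→∞} a_n = limsup_{n→∞} b_n and liminf_{n→∞} a_n = liminf_{n→∞} b_n; in particular the non-signaling and meta-converse strong converse exponents coincide. -/

import Mathlib

open Matrix Kronecker Filter ComplexOrder

namespace QCoding

/-- Partial trace over the first tensor factor. -/
noncomputable def trFst {R B : Type*} [Fintype R]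
    (Λ : Matrix (R × B) (R × B) ℂ) : Matrix B B ℂ :=
  fun b b' => ∑ r, Λ (r, b) (r, b')

/-- Partial trace over the second tensor factor. -/
noncomputable def trSnd {R B : Type*} [Fintype B]
    (Λ : Matrix (R × B) (R × B) ℂ) : Matrix R R ℂ :=
  fun r r' => ∑ b, Λ (r, b) (r', b)

/-- A quantum state: positive semidefinite with unit trace. -/
def IsState {n : Type*} [Fintype n] (ρ : Matrix n n ℂ) : Prop :=
  ρ.PosSemidef ∧ ρ.trace = 1

/-- A Choi matrix of a quantum channel: positive semidefinite with
partial trace over the output system equal to the identity. -/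
def IsChoi {A B : Type*} [Fintype A] [Fintype B] [DecidableEq A]
    (J : Matrix (A × B) (A × B) ℂ) : Prop :=
  J.PosSemidef ∧ trSnd J = 1

/-- The non-signaling success probability: supremum of `(1/M) Tr[Λ J]` over states `ρ`
and `Λ` with `0 ≼ Λ ≼ M (ρ ⊗ I_B)` and `Tr_R Λ = I_B`. -/
noncomputable def sucNS {A B : Type*} [Fintype A] [Fintype B] [DecidableEq B]
    (J : Matrix (A × B) (A × B) ℂ) (M : ℝ) : ℝ :=
  sSup {x | ∃ ρ : Matrix A A ℂ, ∃ Λ : Matrix (A × B) (A × B) ℂ,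
    IsState ρ ∧ Λ.PosSemidef ∧
    ((M : ℂ) • (ρ ⊗ₖ (1 : Matrix B B ℂ)) - Λ).PosSemidef ∧
    trFst Λ = 1 ∧ x = (1 / M) * (Λ * J).trace.re}

/-- The meta-converse success probability: as `sucNS` but with `Tr_R Λ ≼ I_B`. -/
noncomputable def sucMC {A B : Type*} [Fintype A] [Fintype B] [DecidableEq B]
    (J : Matrix (A × B) (A × B) ℂ) (M : ℝ) : ℝ :=
  sSup {x | ∃ ρ : Matrix A A ℂ, ∃ Λ : Matrix (A × B) (A × B) ℂ,
    IsState ρ ∧ Λ.PosSemidef ∧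
    ((M : ℂ) • (ρ ⊗ₖ (1 : Matrix B B ℂ)) - Λ).PosSemidef ∧
    ((1 : Matrix B B ℂ) - trFst Λ).PosSemidef ∧
    x = (1 / M) * (Λ * J).trace.re}

/-- The fixed-input non-signaling success probability: supremum of `Tr[Λ J]` over `Λ`
with `0 ≼ Λ ≼ ρ ⊗ I_B` and `Tr_R Λ = (1/M) I_B`. -/
noncomputable def sucNSFixed {A B : Type*} [Fintype A] [Fintype B] [DecidableEq B]
    (J : Matrix (A × B) (A × B) ℂ) (M : ℝ) (ρ : Matrix A A ℂ) : ℝ :=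
  sSup {x | ∃ Λ : Matrix (A × B) (A × B) ℂ, Λ.PosSemidef ∧
    ((ρ ⊗ₖ (1 : Matrix B B ℂ)) - Λ).PosSemidef ∧
    trFst Λ = ((1 / M : ℂ)) • (1 : Matrix B B ℂ) ∧
    x = (Λ * J).trace.re}

/-- Apply a real function spectrally to a Hermitian matrix (junk value `0` otherwise). -/
noncomputable def hermApply {n : Type*} [Fintype n] [DecidableEq n]
    (H : Matrix n n ℂ) (f : ℝ → ℝ) : Matrix n n ℂ :=
  if h : H.IsHermitian then
    (h.eigenvectorUnitary : Matrix n n ℂ) *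
      Matrix.diagonal (fun i => (f (h.eigenvalues i) : ℂ)) *
      (star (h.eigenvectorUnitary : Matrix n n ℂ))
  else 0

/-- Real (spectral) power of a positive semidefinite matrix, with the Moore-Penrose
convention: for `p ≠ 0` the eigenvalue `0` is mapped to `(0:ℝ) ^ p = 0`.
In particular `matRPow ρ (1/2)` is the positive semidefinite square root of `ρ` and
`matRPow ρ (-(1/2))` is the Moore-Penrose pseudo-inverse of that square root. -/
noncomputable def matRPow {n : Type*} [Fintype n] [DecidableEq n]
    (H : Matrix n n ℂ) (p : ℝ) : Matrix n n ℂ :=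
  hermApply H (fun x => x ^ p)

/-- Positive part of a Hermitian matrix: each eigenvalue `λ` is replaced by `max λ 0`. -/
noncomputable def posPart {n : Type*} [Fintype n] [DecidableEq n]
    (H : Matrix n n ℂ) : Matrix n n ℂ :=
  hermApply H (fun x => max x 0)

/-- Support inclusion for positive semidefinite matrices: the kernel of `σ` is
contained in the kernel of `ρ`, i.e. the support of `ρ` is contained in that of `σ`. -/
def SuppLe {n : Type*} [Fintype n] (ρ σ : Matrix n n ℂ) : Prop :=
  ∀ v : n → ℂ, σ.mulVec v = 0 → ρ.mulVec v = 0

/-- The sandwiched Rényi divergence of order `α` (finite-value formula, meaningful when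
the support of `ρ` is contained in that of `σ`). -/
noncomputable def sandDiv {n : Type*} [Fintype n] [DecidableEq n]
    (α : ℝ) (ρ σ : Matrix n n ℂ) : ℝ :=
  (α - 1)⁻¹ * Real.log
    ((matRPow (matRPow σ ((1 - α) / (2 * α)) * ρ * matRPow σ ((1 - α) / (2 * α))) α).trace.re)

/-- The channel's sandwiched Rényi mutual information of order `α`:
`sup_ρ inf_σ D̃_α((ρ^{1/2} ⊗ I_B) J (ρ^{1/2} ⊗ I_B) ‖ ρ ⊗ σ)`, the infimum being
restricted to those `σ` for which the support condition holds (the divergence is `+∞`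
otherwise, so such `σ` never contribute to the infimum). -/
noncomputable def sandMI {A B : Type*} [Fintype A] [Fintype B] [DecidableEq A] [DecidableEq B]
    (α : ℝ) (J : Matrix (A × B) (A × B) ℂ) : ℝ :=
  sSup {x | ∃ ρ : Matrix A A ℂ, IsState ρ ∧
    x = sInf {y | ∃ σ : Matrix B B ℂ, IsState σ ∧
      SuppLe ((matRPow ρ (1/2) ⊗ₖ (1 : Matrix B B ℂ)) * J *
          (matRPow ρ (1/2) ⊗ₖ (1 : Matrix B B ℂ))) (ρ ⊗ₖ σ) ∧
      y = sandDiv α ((matRPow ρ (1/2) ⊗ₖ (1 : Matrix B B ℂ)) * J *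
          (matRPow ρ (1/2) ⊗ₖ (1 : Matrix B B ℂ))) (ρ ⊗ₖ σ)}}

/-- Choi matrix of the `n`-fold tensor power channel. -/
noncomputable def choiPow {A B : Type*} (J : Matrix (A × B) (A × B) ℂ) (n : ℕ) :
    Matrix ((Fin n → A) × (Fin n → B)) ((Fin n → A) × (Fin n → B)) ℂ :=
  fun p q => ∏ k : Fin n, J (p.1 k, p.2 k) (q.1 k, q.2 k)

/-- Action of the channel with Choi matrix `C` (from `S` to `T`) on the first tensor
factor of a bipartite matrix on `S × E`. -/
noncomputable def chanApply {S T E : Type*} [Fintype S]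
    (C : Matrix (S × T) (S × T) ℂ) (X : Matrix (S × E) (S × E) ℂ) :
    Matrix (T × E) (T × E) ℂ :=
  fun p q => ∑ s : S, ∑ s' : S, C (s, p.1) (s', q.1) * X (s, p.2) (s', q.2)

/-- The entanglement-assisted success probability for `M` messages: supremum over a
shared pure entangled state `ψ` on `Fin d × Fin d`, encoding channels `K m` from `E_A`
to `A` (Choi matrices), and a POVM `Ξ` on `B × E_B`, of the average probability of
correct decoding. -/
noncomputable def sucEA {A B : Type*} [Fintype A] [Fintype B] [DecidableEq B]
    (J : Matrix (A × B) (A × B) ℂ) (M : ℕ) : ℝ :=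
  sSup {x | ∃ d : ℕ, 1 ≤ d ∧
    ∃ ψ : Fin d × Fin d → ℂ, (∑ i, Complex.normSq (ψ i)) = 1 ∧
    ∃ K : Fin M → Matrix (Fin d × A) (Fin d × A) ℂ,
      (∀ m, (K m).PosSemidef ∧ trSnd (K m) = 1) ∧
    ∃ Ξ : Fin M → Matrix (B × Fin d) (B × Fin d) ℂ,
      (∀ m, (Ξ m).PosSemidef) ∧ (∑ m, Ξ m) = 1 ∧
      x = (1 / (M : ℝ)) *
        ∑ m, ((Ξ m) * chanApply J (chanApply (K m) (Matrix.vecMulVec ψ (star ψ)))).trace.re}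


lemma psd_iff_eq_ctm {n : Type*} [Fintype n] {A : Matrix n n ℂ} :
    A.PosSemidef ↔ ∃ B : Matrix n n ℂ, A = Bᴴ * B := by
  classical
  open scoped MatrixOrder in
  constructor
  · intro h
    obtain ⟨B, hB⟩ := CStarAlgebra.nonneg_iff_eq_star_mul_self.mp h.nonneg
    exact ⟨B, hB⟩
  · rintro ⟨B, rfl⟩
    exact Matrix.posSemidef_conjTranspose_mul_self B

lemma psd_diag_nonneg {n : Type*} [Fintype n] [DecidableEq n] {M : Matrix n n ℂ}
    (h : M.PosSemidef) (i : n) : 0 ≤ M i i := by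
  have := h.dotProduct_mulVec_nonneg (Pi.single i 1)
  simpa [dotProduct, Matrix.mulVec, Pi.single_apply, Finset.sum_ite_eq,
    mul_comm] using this

lemma psd_trace_re_nonneg {n : Type*} [Fintype n] [DecidableEq n] {M : Matrix n n ℂ}
    (h : M.PosSemidef) : 0 ≤ M.trace.re := by
  have h0 : (0:ℂ) ≤ M.trace := Finset.sum_nonneg fun i _ => psd_diag_nonneg h i
  simpa using (Complex.le_def.mp h0).1

lemma trace_mul_psd_nonneg {n : Type*} [Fintype n] [DecidableEq n] {X Y : Matrix n n ℂ}
    (hX : X.PosSemidef) (hY : Y.PosSemidef) : 0 ≤ ((X * Y).trace).re := by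
  obtain ⟨B, rfl⟩ := psd_iff_eq_ctm.mp hX
  have h1 : (Bᴴ * B * Y).trace = (B * Y * Bᴴ).trace := by
    rw [Matrix.mul_assoc, Matrix.trace_mul_comm, Matrix.mul_assoc]
  rw [h1]
  exact psd_trace_re_nonneg (hY.mul_mul_conjTranspose_same B)

lemma conjTranspose_kron {l m n p : Type*} (X : Matrix l m ℂ) (Y : Matrix n p ℂ) :
    (X ⊗ₖ Y)ᴴ = Xᴴ ⊗ₖ Yᴴ := by
  ext ⟨a, b⟩ ⟨c, d⟩
  simp [Matrix.conjTranspose_apply, Matrix.kroneckerMap_apply]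

lemma psd_kron {m n : Type*} [Fintype m] [Fintype n] {X : Matrix m m ℂ} {Y : Matrix n n ℂ}
    (hX : X.PosSemidef) (hY : Y.PosSemidef) : (X ⊗ₖ Y).PosSemidef := by
  obtain ⟨B, rfl⟩ := psd_iff_eq_ctm.mp hX
  obtain ⟨C, rfl⟩ := psd_iff_eq_ctm.mp hY
  exact psd_iff_eq_ctm.mpr
    ⟨B ⊗ₖ C, by rw [conjTranspose_kron, ← Matrix.mul_kronecker_mul]⟩

lemma psd_smul {n : Type*} [Fintype n] {M : Matrix n n ℂ} (h : M.PosSemidef)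
    {c : ℝ} (hc : 0 ≤ c) : ((c : ℂ) • M).PosSemidef := by
  refine Matrix.PosSemidef.of_dotProduct_mulVec_nonneg ?_ ?_
  · have : ((c:ℂ) • M)ᴴ = (starRingEnd ℂ) (c:ℂ) • Mᴴ := Matrix.conjTranspose_smul _ _
    rw [Matrix.IsHermitian, this, Complex.conj_ofReal, h.1.eq]
  · intro x
    rw [Matrix.smul_mulVec, dotProduct_smul, smul_eq_mul]
    exact mul_nonneg (Complex.zero_le_real.mpr hc) (h.dotProduct_mulVec_nonneg x)


lemma trFst_add {R B : Type*} [Fintype R] (X Y : Matrix (R × B) (R × B) ℂ) :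
    trFst (X + Y) = trFst X + trFst Y := by
  ext b b'
  simp [trFst, Finset.sum_add_distrib]

lemma trFst_smul {R B : Type*} [Fintype R] (c : ℂ) (X : Matrix (R × B) (R × B) ℂ) :
    trFst (c • X) = c • trFst X := by
  ext b b'
  simp [trFst, Finset.mul_sum]

lemma trFst_kron_one {R B : Type*} [Fintype R] [Fintype B] [DecidableEq B]
    (ρ : Matrix R R ℂ) (X : Matrix B B ℂ) :
    trFst (ρ ⊗ₖ X) = ρ.trace • X := by
  ext b b'
  simp [trFst, Matrix.kroneckerMap_apply, Matrix.trace, Matrix.diag, Finset.sum_mul]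

lemma trFst_posSemidef {R B : Type*} [Fintype R] [Fintype B] [DecidableEq R]
    {Λ : Matrix (R × B) (R × B) ℂ} (h : Λ.PosSemidef) : (trFst Λ).PosSemidef := by
  refine Matrix.PosSemidef.of_dotProduct_mulVec_nonneg ?_ ?_
  · ext b b'
    have := fun r => congrFun (congrFun h.1.eq (r, b)) (r, b')
    simp only [Matrix.conjTranspose_apply] at this ⊢
    simp only [trFst, star_sum]
    exact Finset.sum_congr rfl fun r _ => this r
  · intro v
    have key : ∀ r : R, (star (fun p : R × B => if p.1 = r then v p.2 else 0)) ⬝ᵥ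
          Λ *ᵥ (fun p : R × B => if p.1 = r then v p.2 else 0)
        = ∑ b, star (v b) * ∑ b', Λ (r, b) (r, b') * v b' := by
      intro r
      simp only [dotProduct, Matrix.mulVec, Pi.star_apply, Fintype.sum_prod_type,
        apply_ite (star : ℂ → ℂ), star_zero, mul_ite, mul_zero, ite_mul, zero_mul]
      rw [Finset.sum_comm]
      simp only [Finset.sum_ite_eq', Finset.mem_univ, if_true]
      refine Finset.sum_congr rfl fun b _ => ?_
      congr 1
      rw [Finset.sum_comm]
      simp only [Finset.sum_ite_eq', Finset.mem_univ, if_true]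
    have e1 : star v ⬝ᵥ trFst Λ *ᵥ v
        = ∑ b, star (v b) * ∑ b', (∑ r, Λ (r, b) (r, b')) * v b' := rfl
    have e2 : ∀ b, star (v b) * ∑ b', (∑ r, Λ (r, b) (r, b')) * v b'
        = ∑ r, ∑ b', star (v b) * (Λ (r, b) (r, b') * v b') := by
      intro b
      simp only [Finset.sum_mul, Finset.mul_sum]
      exact Finset.sum_comm
    rw [e1, Finset.sum_congr rfl fun b _ => e2 b, Finset.sum_comm]
    refine Finset.sum_nonneg fun r _ => ?_
    have := h.dotProduct_mulVec_nonneg (fun p : R × B => if p.1 = r then v p.2 else 0)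
    rw [key r] at this
    simpa only [Finset.mul_sum] using this

lemma trace_kron_one_mul {A B : Type*} [Fintype A] [Fintype B] [DecidableEq B]
    (ρ : Matrix A A ℂ) (J : Matrix (A × B) (A × B) ℂ) :
    ((ρ ⊗ₖ (1 : Matrix B B ℂ)) * J).trace = (ρ * trSnd J).trace := by
  have e1 : ((ρ ⊗ₖ (1 : Matrix B B ℂ)) * J).trace
      = ∑ a : A, ∑ b : B, ∑ a' : A, ∑ b' : B,
          (ρ a a' * (1 : Matrix B B ℂ) b b') * J (a', b') (a, b) := by
    simp only [Matrix.trace, Matrix.diag, Matrix.mul_apply, Fintype.sum_prod_type,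
      Matrix.kroneckerMap_apply]
  rw [e1]
  simp only [Matrix.one_apply, ite_mul, one_mul, zero_mul, mul_ite, mul_zero, mul_one,
    Finset.sum_ite_eq, Finset.sum_ite_eq', Finset.mem_univ, if_true]
  simp only [Matrix.trace, Matrix.diag, Matrix.mul_apply, trSnd, Finset.mul_sum]
  exact Finset.sum_congr rfl fun a _ => Finset.sum_comm

lemma choiPow_posSemidef {A B : Type*} [Fintype A] [Fintype B]
    {J : Matrix (A × B) (A × B) ℂ} (hJ : J.PosSemidef) (n : ℕ) :
    (choiPow J n).PosSemidef := by
  classical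
  obtain ⟨C, hC⟩ := psd_iff_eq_ctm.mp hJ
  set D : Matrix (Fin n → A × B) ((Fin n → A) × (Fin n → B)) ℂ :=
    fun s p => ∏ k, C (s k) (p.1 k, p.2 k) with hD
  have key : choiPow J n = Dᴴ * D := by
    ext p q
    simp only [choiPow, Matrix.mul_apply, Matrix.conjTranspose_apply, hD, star_prod, hC]
    rw [Fintype.prod_sum (fun k (y : A × B) => star (C y (p.1 k, p.2 k)) * C y (q.1 k, q.2 k))]
    exact Finset.sum_congr rfl fun s _ => by
      show _ = star (∏ k, C (s k) (p.1 k, p.2 k)) * ∏ k, C (s k) (q.1 k, q.2 k)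
      rw [star_prod, Finset.prod_mul_distrib]
  rw [key]
  exact Matrix.posSemidef_conjTranspose_mul_self D

lemma trSnd_choiPow {A B : Type*} [Fintype A] [Fintype B] [DecidableEq A]
    {J : Matrix (A × B) (A × B) ℂ} (hJ : trSnd J = 1) (n : ℕ) :
    trSnd (choiPow J n) = 1 := by
  classical
  ext p q
  have e : trSnd (choiPow J n) p q = ∏ k, trSnd J (p k) (q k) := by
    simp only [trSnd, choiPow]
    rw [← Fintype.prod_sum (fun k (y : B) => J (p k, y) (q k, y))]
  rw [e, hJ]
  simp only [Matrix.one_apply]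
  rw [Finset.prod_boole]
  simp [funext_iff]

lemma core_bounds {A B : Type*} [Fintype A] [Fintype B] [DecidableEq A] [DecidableEq B]
    [Nonempty A] {J : Matrix (A × B) (A × B) ℂ} (hJ : IsChoi J) {M : ℝ} (hM : 1 ≤ M) :
    1/M ≤ sucNS J M ∧ sucNS J M ≤ sucMC J M ∧ sucMC J M ≤ 1 ∧
      (1 - 1/M) * sucMC J M ≤ sucNS J M := by
  classical
  have hM0 : 0 < M := lt_of_lt_of_le one_pos hM
  obtain ⟨hJpsd, hJtr⟩ := hJ
  -- the trace of (ρ ⊗ 1) * J equals 1 for any state ρ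
  have trace1 : ∀ ρ : Matrix A A ℂ, IsState ρ →
      ((ρ ⊗ₖ (1 : Matrix B B ℂ)) * J).trace = 1 := by
    intro ρ hρ
    rw [trace_kron_one_mul, hJtr, Matrix.mul_one, hρ.2]
  -- uniform state
  have hcard : (0:ℝ) < (Fintype.card A : ℝ) := by
    exact_mod_cast Fintype.card_pos
  set ρ0 : Matrix A A ℂ := (((Fintype.card A : ℝ)⁻¹ : ℝ) : ℂ) • (1 : Matrix A A ℂ) with hρ0
  have hρ0state : IsState ρ0 := by
    constructor
    · exact psd_smul Matrix.PosSemidef.one (by positivity)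
    · rw [hρ0, Matrix.trace_smul, Matrix.trace_one, smul_eq_mul]
      have h0 : ((Fintype.card A : ℕ) : ℂ) ≠ 0 := Nat.cast_ne_zero.mpr Fintype.card_pos.ne'
      push_cast
      field_simp
  -- value bound for MC elements
  have hvalue : ∀ (ρ : Matrix A A ℂ) (Λ : Matrix (A × B) (A × B) ℂ), IsState ρ →
      ((M : ℂ) • (ρ ⊗ₖ (1 : Matrix B B ℂ)) - Λ).PosSemidef →
      (1/M) * ((Λ * J).trace.re) ≤ 1 := by
    intro ρ Λ hρ hub
    have h0 : 0 ≤ ((((M : ℂ) • (ρ ⊗ₖ (1 : Matrix B B ℂ)) - Λ) * J).trace).re :=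
      trace_mul_psd_nonneg hub hJpsd
    have e : (((M : ℂ) • (ρ ⊗ₖ (1 : Matrix B B ℂ)) - Λ) * J).trace
        = (M : ℂ) * ((ρ ⊗ₖ (1 : Matrix B B ℂ)) * J).trace - (Λ * J).trace := by
      rw [Matrix.sub_mul, Matrix.trace_sub, Matrix.smul_mul, Matrix.trace_smul, smul_eq_mul]
    rw [e, trace1 ρ hρ, mul_one] at h0
    rw [Complex.sub_re, Complex.ofReal_re] at h0
    rw [div_mul_eq_mul_div, one_mul, div_le_one hM0]
    linarith
  -- membership of 1/M in the NS set
  have memNS : (1/M) ∈ {x | ∃ ρ : Matrix A A ℂ, ∃ Λ : Matrix (A × B) (A × B) ℂ,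
      IsState ρ ∧ Λ.PosSemidef ∧
      ((M : ℂ) • (ρ ⊗ₖ (1 : Matrix B B ℂ)) - Λ).PosSemidef ∧
      trFst Λ = 1 ∧ x = (1 / M) * (Λ * J).trace.re} := by
    refine ⟨ρ0, ρ0 ⊗ₖ (1 : Matrix B B ℂ), hρ0state,
      psd_kron hρ0state.1 Matrix.PosSemidef.one, ?_, ?_, ?_⟩
    · have e : (M : ℂ) • (ρ0 ⊗ₖ (1 : Matrix B B ℂ)) - ρ0 ⊗ₖ (1 : Matrix B B ℂ)
          = (((M - 1 : ℝ)) : ℂ) • (ρ0 ⊗ₖ (1 : Matrix B B ℂ)) := by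
        push_cast
        rw [sub_smul, one_smul]
      rw [e]
      exact psd_smul (psd_kron hρ0state.1 Matrix.PosSemidef.one) (by linarith)
    · rw [trFst_kron_one, hρ0state.2, one_smul]
    · rw [trace1 ρ0 hρ0state]
      norm_num
  -- NS set is a subset of the MC set
  have hsub : {x | ∃ ρ : Matrix A A ℂ, ∃ Λ : Matrix (A × B) (A × B) ℂ,
      IsState ρ ∧ Λ.PosSemidef ∧
      ((M : ℂ) • (ρ ⊗ₖ (1 : Matrix B B ℂ)) - Λ).PosSemidef ∧
      trFst Λ = 1 ∧ x = (1 / M) * (Λ * J).trace.re} ⊆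
      {x | ∃ ρ : Matrix A A ℂ, ∃ Λ : Matrix (A × B) (A × B) ℂ,
      IsState ρ ∧ Λ.PosSemidef ∧
      ((M : ℂ) • (ρ ⊗ₖ (1 : Matrix B B ℂ)) - Λ).PosSemidef ∧
      ((1 : Matrix B B ℂ) - trFst Λ).PosSemidef ∧ x = (1 / M) * (Λ * J).trace.re} := by
    rintro x ⟨ρ, Λ, h1, h2, h3, h4, h5⟩
    exact ⟨ρ, Λ, h1, h2, h3, by rw [h4, sub_self]; exact Matrix.PosSemidef.zero, h5⟩
  have bddMC : BddAbove {x | ∃ ρ : Matrix A A ℂ, ∃ Λ : Matrix (A × B) (A × B) ℂ,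
      IsState ρ ∧ Λ.PosSemidef ∧
      ((M : ℂ) • (ρ ⊗ₖ (1 : Matrix B B ℂ)) - Λ).PosSemidef ∧
      ((1 : Matrix B B ℂ) - trFst Λ).PosSemidef ∧ x = (1 / M) * (Λ * J).trace.re} := by
    refine ⟨1, ?_⟩
    rintro x ⟨ρ, Λ, h1, h2, h3, h4, rfl⟩
    exact hvalue ρ Λ h1 h3
  have bddNS := bddMC.mono hsub
  have hNSlb : 1/M ≤ sucNS J M := le_csSup bddNS memNS
  have hNSMC : sucNS J M ≤ sucMC J M := csSup_le_csSup bddMC ⟨1/M, memNS⟩ hsub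
  have hMCub : sucMC J M ≤ 1 := by
    refine csSup_le ⟨1/M, hsub memNS⟩ ?_
    rintro x ⟨ρ, Λ, h1, h2, h3, h4, rfl⟩
    exact hvalue ρ Λ h1 h3
  refine ⟨hNSlb, hNSMC, hMCub, ?_⟩
  -- the key inequality
  set c : ℝ := 1 - 1/M with hc
  have hdiv : 1/M ≤ 1 := by rw [div_le_one hM0]; exact hM
  have hdiv0 : 0 < 1/M := by positivity
  have hc0 : 0 ≤ c := by
    show (0:ℝ) ≤ 1 - 1/M
    linarith
  have hc1 : c ≤ 1 := by
    show (1:ℝ) - 1/M ≤ 1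
    linarith
  have key : ∀ x ∈ {x | ∃ ρ : Matrix A A ℂ, ∃ Λ : Matrix (A × B) (A × B) ℂ,
      IsState ρ ∧ Λ.PosSemidef ∧
      ((M : ℂ) • (ρ ⊗ₖ (1 : Matrix B B ℂ)) - Λ).PosSemidef ∧
      ((1 : Matrix B B ℂ) - trFst Λ).PosSemidef ∧ x = (1 / M) * (Λ * J).trace.re},
      c * x ≤ sucNS J M := by
    rintro x ⟨ρ, Λ, hρ, hΛ, hub, hT1, rfl⟩
    set T : Matrix B B ℂ := trFst Λ with hT
    have hTpsd : T.PosSemidef := trFst_posSemidef hΛ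
    have hXpsd : ((1 : Matrix B B ℂ) - (c : ℂ) • T).PosSemidef := by
      have e : (1 : Matrix B B ℂ) - (c : ℂ) • T
          = (c : ℂ) • ((1 : Matrix B B ℂ) - T) + (((1 - c : ℝ)) : ℂ) • (1 : Matrix B B ℂ) := by
        push_cast
        module
      rw [e]
      exact (psd_smul hT1 hc0).add (psd_smul Matrix.PosSemidef.one (by linarith))
    set Λ' : Matrix (A × B) (A × B) ℂ :=
      (c : ℂ) • Λ + ρ ⊗ₖ ((1 : Matrix B B ℂ) - (c : ℂ) • T) with hΛ'
    have hkron : ρ ⊗ₖ ((1 : Matrix B B ℂ) - (c : ℂ) • T)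
        = ρ ⊗ₖ (1 : Matrix B B ℂ) - (c : ℂ) • (ρ ⊗ₖ T) := by
      ext ⟨a, b⟩ ⟨a', b'⟩
      simp only [Matrix.kroneckerMap_apply, Matrix.sub_apply, Matrix.smul_apply, smul_eq_mul]
      ring
    have hMc : (M : ℂ) - 1 = (c : ℂ) * (M : ℂ) := by
      have hMne : (M : ℂ) ≠ 0 := by
        exact_mod_cast Complex.ofReal_ne_zero.mpr hM0.ne'
      rw [hc]
      push_cast
      field_simp
    have hub' : ((M : ℂ) • (ρ ⊗ₖ (1 : Matrix B B ℂ)) - Λ').PosSemidef := by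
      have e : (M : ℂ) • (ρ ⊗ₖ (1 : Matrix B B ℂ)) - Λ'
          = (c : ℂ) • ((M : ℂ) • (ρ ⊗ₖ (1 : Matrix B B ℂ)) - Λ) + (c : ℂ) • (ρ ⊗ₖ T) := by
        rw [hΛ', hkron]
        have expand : ∀ K P : Matrix (A × B) (A × B) ℂ,
            (M : ℂ) • K - ((c : ℂ) • Λ + (K - (c : ℂ) • P))
            = ((M : ℂ) - 1) • K - (c : ℂ) • Λ + (c : ℂ) • P := by
          intro K P; module
        rw [expand, hMc]
        module
      rw [e]
      exact (psd_smul hub hc0).add (psd_smul (psd_kron hρ.1 hTpsd) hc0)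
    have htr' : trFst Λ' = 1 := by
      rw [hΛ', trFst_add, trFst_smul, trFst_kron_one, hρ.2, one_smul, ← hT]
      module
    have hΛ'psd : Λ'.PosSemidef := (psd_smul hΛ hc0).add (psd_kron hρ.1 hXpsd)
    have hpos2 : 0 ≤ (((ρ ⊗ₖ ((1 : Matrix B B ℂ) - (c : ℂ) • T)) * J).trace).re :=
      trace_mul_psd_nonneg (psd_kron hρ.1 hXpsd) hJpsd
    have etrace : ((Λ' * J).trace).re
        = c * ((Λ * J).trace).re + (((ρ ⊗ₖ ((1 : Matrix B B ℂ) - (c : ℂ) • T)) * J).trace).re := by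
      rw [hΛ', Matrix.add_mul, Matrix.trace_add, Matrix.smul_mul, Matrix.trace_smul,
        Complex.add_re, smul_eq_mul, Complex.re_ofReal_mul]
    have memNS' : (1/M) * ((Λ' * J).trace).re ∈ {x | ∃ ρ : Matrix A A ℂ,
        ∃ Λ : Matrix (A × B) (A × B) ℂ, IsState ρ ∧ Λ.PosSemidef ∧
        ((M : ℂ) • (ρ ⊗ₖ (1 : Matrix B B ℂ)) - Λ).PosSemidef ∧
        trFst Λ = 1 ∧ x = (1 / M) * (Λ * J).trace.re} :=
      ⟨ρ, Λ', hρ, hΛ'psd, hub', htr', rfl⟩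
    have hy : (1/M) * ((Λ' * J).trace).re ≤ sucNS J M := le_csSup bddNS memNS'
    have : c * ((1 / M) * ((Λ * J).trace).re) ≤ (1/M) * ((Λ' * J).trace).re := by
      rw [etrace, mul_add]
      have h1 : c * (1 / M * ((Λ * J).trace).re) = 1 / M * (c * ((Λ * J).trace).re) := by ring
      rw [h1]
      have : 0 ≤ 1 / M * (((ρ ⊗ₖ ((1 : Matrix B B ℂ) - (c : ℂ) • T)) * J).trace).re := by
        apply mul_nonneg (by positivity) hpos2
      linarith
    exact this.trans hy
  rcases eq_or_lt_of_le hc0 with hceq | hcpos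
  · rw [← hceq, zero_mul]
    exact le_trans (by positivity) hNSlb
  · have hMCle : sucMC J M ≤ sucNS J M / c := by
      refine csSup_le ⟨1/M, hsub memNS⟩ ?_
      intro x hx
      rw [le_div_iff₀ hcpos]
      calc x * c = c * x := by ring
        _ ≤ sucNS J M := key x hx
    calc c * sucMC J M ≤ c * (sucNS J M / c) := by
          exact mul_le_mul_of_nonneg_left hMCle hc0
      _ = sucNS J M := by field_simp

/-- The non-signaling and meta-converse strong converse exponents
coincide: the `limsup`s and `liminf`s of the respective exponent sequences agree. -/
theorem ns_mc_exponents_eq {A B : Type*} [Fintype A] [DecidableEq A] [Nonempty A]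
    [Fintype B] [DecidableEq B]
    (J : Matrix (A × B) (A × B) ℂ) (hJ : IsChoi J)
    (r : ℝ) (hr : 0 ≤ r) :
    limsup (fun n : ℕ =>
        -(1 / (n : ℝ)) * Real.log (sucNS (choiPow J n) (Real.exp (n * r)))) atTop =
      limsup (fun n : ℕ =>
        -(1 / (n : ℝ)) * Real.log (sucMC (choiPow J n) (Real.exp (n * r)))) atTop ∧
    liminf (fun n : ℕ =>
        -(1 / (n : ℝ)) * Real.log (sucNS (choiPow J n) (Real.exp (n * r)))) atTop =
      liminf (fun n : ℕ =>
        -(1 / (n : ℝ)) * Real.log (sucMC (choiPow J n) (Real.exp (n * r)))) atTop := by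
  classical
  have hfacts : ∀ n : ℕ,
      Real.exp (-((n:ℝ) * r)) ≤ sucNS (choiPow J n) (Real.exp ((n:ℝ) * r)) ∧
      sucNS (choiPow J n) (Real.exp ((n:ℝ) * r)) ≤ sucMC (choiPow J n) (Real.exp ((n:ℝ) * r)) ∧
      sucMC (choiPow J n) (Real.exp ((n:ℝ) * r)) ≤ 1 ∧
      (1 - Real.exp (-((n:ℝ) * r))) * sucMC (choiPow J n) (Real.exp ((n:ℝ) * r)) ≤
        sucNS (choiPow J n) (Real.exp ((n:ℝ) * r)) := by
    intro n
    have hchoi : IsChoi (choiPow J n) := ⟨choiPow_posSemidef hJ.1 n, trSnd_choiPow hJ.2 n⟩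
    have hM : 1 ≤ Real.exp ((n:ℝ) * r) := Real.one_le_exp (by positivity)
    have h := core_bounds hchoi hM
    rw [one_div, ← Real.exp_neg] at h
    exact h
  set f : ℕ → ℝ := fun n : ℕ =>
    -(1 / (n : ℝ)) * Real.log (sucNS (choiPow J n) (Real.exp (n * r))) with hf
  set g : ℕ → ℝ := fun n : ℕ =>
    -(1 / (n : ℝ)) * Real.log (sucMC (choiPow J n) (Real.exp (n * r))) with hg
  have hs_pos : ∀ n : ℕ, 0 < sucNS (choiPow J n) (Real.exp ((n:ℝ) * r)) :=
    fun n => lt_of_lt_of_le (Real.exp_pos _) (hfacts n).1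
  have ht_pos : ∀ n : ℕ, 0 < sucMC (choiPow J n) (Real.exp ((n:ℝ) * r)) :=
    fun n => lt_of_lt_of_le (hs_pos n) (hfacts n).2.1
  have hinv_nonneg : ∀ n : ℕ, (0:ℝ) ≤ 1 / (n:ℝ) := fun n => by positivity
  have hmulnn : ∀ a b : ℝ, a ≤ 0 → b ≤ 0 → 0 ≤ a * b := fun a b ha hb => by nlinarith
  have hgf : ∀ n, g n ≤ f n := by
    intro n
    have hlog : Real.log (sucNS (choiPow J n) (Real.exp ((n:ℝ) * r)))
        ≤ Real.log (sucMC (choiPow J n) (Real.exp ((n:ℝ) * r))) :=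
      Real.log_le_log (hs_pos n) (hfacts n).2.1
    exact mul_le_mul_of_nonpos_left hlog (neg_nonpos.mpr (hinv_nonneg n))
  have hf0 : ∀ n, 0 ≤ f n := by
    intro n
    have h1 : Real.log (sucNS (choiPow J n) (Real.exp ((n:ℝ) * r))) ≤ 0 :=
      Real.log_nonpos (hs_pos n).le ((hfacts n).2.1.trans (hfacts n).2.2.1)
    exact hmulnn _ _ (neg_nonpos.mpr (hinv_nonneg n)) h1
  have hg0 : ∀ n, 0 ≤ g n := by
    intro n
    have h1 : Real.log (sucMC (choiPow J n) (Real.exp ((n:ℝ) * r))) ≤ 0 :=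
      Real.log_nonpos (ht_pos n).le (hfacts n).2.2.1
    exact hmulnn _ _ (neg_nonpos.mpr (hinv_nonneg n)) h1
  have hfr : ∀ n, f n ≤ r := by
    intro n
    rcases Nat.eq_zero_or_pos n with rfl | hn
    · simp [hf, hr]
    · have hn0 : (0:ℝ) < (n:ℝ) := by exact_mod_cast hn
      have h1 : -((n:ℝ) * r) ≤ Real.log (sucNS (choiPow J n) (Real.exp ((n:ℝ) * r))) := by
        have := Real.log_le_log (Real.exp_pos _) (hfacts n).1
        rwa [Real.log_exp] at this
      have h2 : f n ≤ -(1 / (n:ℝ)) * -((n:ℝ) * r) :=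
        mul_le_mul_of_nonpos_left h1 (neg_nonpos.mpr (hinv_nonneg n))
      calc f n ≤ -(1 / (n:ℝ)) * -((n:ℝ) * r) := h2
        _ = r := by field_simp
  have bd_f_le : IsBoundedUnder (· ≤ ·) atTop f := isBoundedUnder_of ⟨r, hfr⟩
  have bd_f_ge : IsBoundedUnder (· ≥ ·) atTop f := isBoundedUnder_of ⟨0, hf0⟩
  have bd_g_le : IsBoundedUnder (· ≤ ·) atTop g :=
    isBoundedUnder_of ⟨r, fun n => (hgf n).trans (hfr n)⟩
  have bd_g_ge : IsBoundedUnder (· ≥ ·) atTop g := isBoundedUnder_of ⟨0, hg0⟩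
  rcases hr.eq_or_lt with hr0 | hrpos
  · -- r = 0 : both success probabilities equal 1
    have hfg : f = g := by
      subst hr0
      funext n
      have h := hfacts n
      simp only [mul_zero, neg_zero, Real.exp_zero] at h
      have hs1 : sucNS (choiPow J n) 1 = 1 := le_antisymm (h.2.1.trans h.2.2.1) h.1
      have ht1 : sucMC (choiPow J n) 1 = 1 := le_antisymm h.2.2.1 (h.1.trans h.2.1)
      simp only [hf, hg, mul_zero, Real.exp_zero, hs1, ht1]
    rw [hfg]
    exact ⟨rfl, rfl⟩
  · -- r > 0
    set c : ℕ → ℝ := fun n : ℕ =>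
      -(1 / (n:ℝ)) * Real.log (1 - Real.exp (-((n:ℝ) * r))) with hcdef
    have hexp_lt : ∀ n : ℕ, 1 ≤ n → Real.exp (-((n:ℝ) * r)) < 1 := by
      intro n hn
      apply Real.exp_lt_one_iff.mpr
      have hn0 : (0:ℝ) < (n:ℝ) := by exact_mod_cast hn
      have : 0 < (n:ℝ) * r := mul_pos hn0 hrpos
      linarith
    have hc_nonneg : ∀ n, 0 ≤ c n := by
      intro n
      have h1 : Real.log (1 - Real.exp (-((n:ℝ) * r))) ≤ 0 := by
        rcases Nat.eq_zero_or_pos n with rfl | hn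
        · simp
        · exact Real.log_nonpos (by linarith [(hexp_lt n hn)]) (by
            have := Real.exp_pos (-((n:ℝ) * r)); linarith)
      exact hmulnn _ _ (neg_nonpos.mpr (hinv_nonneg n)) h1
    have hcd : ∀ n, c n ≤ -Real.log (1 - Real.exp (-((n:ℝ) * r))) := by
      intro n
      have h1 : Real.log (1 - Real.exp (-((n:ℝ) * r))) ≤ 0 := by
        rcases Nat.eq_zero_or_pos n with rfl | hn
        · simp
        · exact Real.log_nonpos (by linarith [(hexp_lt n hn)]) (by
            have := Real.exp_pos (-((n:ℝ) * r)); linarith)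
      have h2 : 1 / (n:ℝ) ≤ 1 := by
        rcases Nat.eq_zero_or_pos n with rfl | hn
        · norm_num
        · have hn0 : (0:ℝ) < (n:ℝ) := by exact_mod_cast hn
          rw [div_le_one hn0]
          exact_mod_cast hn
      calc c n = (1 / (n:ℝ)) * (-Real.log (1 - Real.exp (-((n:ℝ) * r)))) := by
            simp only [hcdef]; ring
        _ ≤ 1 * (-Real.log (1 - Real.exp (-((n:ℝ) * r)))) :=
            mul_le_mul_of_nonneg_right h2 (by linarith)
        _ = -Real.log (1 - Real.exp (-((n:ℝ) * r))) := one_mul _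
    have hd_tendsto : Tendsto (fun n : ℕ => -Real.log (1 - Real.exp (-((n:ℝ) * r))))
        atTop (nhds 0) := by
      have h1 : Tendsto (fun n : ℕ => (n:ℝ) * r) atTop atTop :=
        (tendsto_natCast_atTop_atTop).atTop_mul_const hrpos
      have h2 : Tendsto (fun n : ℕ => Real.exp (-((n:ℝ) * r))) atTop (nhds 0) :=
        Real.tendsto_exp_atBot.comp ((tendsto_neg_atTop_atBot).comp h1)
      have h3 : Tendsto (fun n : ℕ => 1 - Real.exp (-((n:ℝ) * r))) atTop (nhds 1) := by
        simpa using tendsto_const_nhds.sub h2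
      have h4 : Tendsto (fun n : ℕ => Real.log (1 - Real.exp (-((n:ℝ) * r)))) atTop (nhds 0) := by
        have := (Real.continuousAt_log one_ne_zero).tendsto.comp h3
        simpa [Function.comp_def] using this
      simpa using h4.neg
    have hc_tendsto : Tendsto c atTop (nhds 0) := squeeze_zero hc_nonneg hcd hd_tendsto
    have bd_c_le : IsBoundedUnder (· ≤ ·) atTop c := hc_tendsto.isBoundedUnder_le
    have bd_c_ge : IsBoundedUnder (· ≥ ·) atTop c := hc_tendsto.isBoundedUnder_ge
    have limsupc : limsup c atTop = 0 := hc_tendsto.limsup_eq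
    have hfc : ∀ n, f n ≤ g n + c n := by
      intro n
      rcases Nat.eq_zero_or_pos n with rfl | hn
      · simp [hf, hg, hcdef]
      · have he : 0 < 1 - Real.exp (-((n:ℝ) * r)) := by linarith [hexp_lt n hn]
        have hlog : Real.log ((1 - Real.exp (-((n:ℝ) * r))) *
              sucMC (choiPow J n) (Real.exp ((n:ℝ) * r)))
            ≤ Real.log (sucNS (choiPow J n) (Real.exp ((n:ℝ) * r))) :=
          Real.log_le_log (mul_pos he (ht_pos n)) (hfacts n).2.2.2
        rw [Real.log_mul he.ne' (ht_pos n).ne'] at hlog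
        have h2 := mul_le_mul_of_nonpos_left hlog (neg_nonpos.mpr (hinv_nonneg n))
        calc f n ≤ -(1 / (n:ℝ)) * (Real.log (1 - Real.exp (-((n:ℝ) * r))) +
              Real.log (sucMC (choiPow J n) (Real.exp ((n:ℝ) * r)))) := h2
          _ = g n + c n := by simp only [hf, hg, hcdef]; ring
    constructor
    · apply le_antisymm
      · calc limsup f atTop ≤ limsup (g + c) atTop := by
              refine limsup_le_limsup (Eventually.of_forall fun n => ?_)
                bd_f_ge.isCoboundedUnder_le (isBoundedUnder_le_add bd_g_le bd_c_le)
              simpa using hfc n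
          _ ≤ limsup g atTop + limsup c atTop :=
              limsup_add_le bd_g_ge bd_g_le bd_c_ge.isCoboundedUnder_le bd_c_le
          _ = limsup g atTop := by rw [limsupc, add_zero]
      · exact limsup_le_limsup (Eventually.of_forall hgf) bd_g_ge.isCoboundedUnder_le bd_f_le
    · apply le_antisymm
      · calc liminf f atTop ≤ liminf (c + g) atTop := by
              refine liminf_le_liminf (Eventually.of_forall fun n => ?_) bd_f_ge
                (isBoundedUnder_le_add bd_c_le bd_g_le).isCoboundedUnder_ge
              simpa [add_comm] using hfc n
          _ ≤ limsup c atTop + liminf g atTop :=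
              liminf_add_le bd_c_ge bd_c_le bd_g_ge bd_g_le.isCoboundedUnder_ge
          _ = liminf g atTop := by rw [limsupc, zero_add]
      · exact liminf_le_liminf (Eventually.of_forall hgf) bd_g_ge bd_f_le.isCoboundedUnder_ge


end QCoding
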